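/- The Goemans–Williamson constant satisfies 0.878 < (2/π)·inf_{0 < x ≤ π} x/(1 − cos x) < 0.879; in particular, for every x ∈ (0,π] one has (2/π)·x/(1 − cos x) > 0.878. -/

import Mathlib

open Real

lemma gw_aux (F f : ℝ → ℝ) (hd : ∀ x, HasDerivAt F (f x) x) (h0 : F 0 = 0)
    (hf : ∀ x, 0 < x → 0 ≤ f x) {x : ℝ} (hx : 0 ≤ x) : 0 ≤ F x := by
  have hm : MonotoneOn F (Set.Ici 0) := by
    apply monotoneOn_of_hasDerivWithinAt_nonneg (f' := f) (convex_Ici 0)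
      (fun y _ => (hd y).continuousAt.continuousWithinAt)
      (fun y _ => (hd y).hasDerivWithinAt)
    intro y hy
    rw [interior_Ici] at hy
    exact hf y hy
  have := hm Set.self_mem_Ici hx hx
  rwa [h0] at this

lemma gw_cos2 {x : ℝ} (hx : 0 ≤ x) : 1 - x^2/2 ≤ Real.cos x := by
  have h := gw_aux (fun t => Real.cos t - (1 - t^2/2)) (fun t => t - Real.sin t)
      (fun y => by
        have h1 := (Real.hasDerivAt_cos y).sub (((hasDerivAt_pow 2 y).div_const 2).const_sub 1)
        exact h1.congr_deriv (by push_cast; ring))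
      (by norm_num)
      (fun y hy => by
        have := Real.sin_le hy.le
        show (0:ℝ) ≤ y - Real.sin y; linarith) hx
  beta_reduce at h; linarith

lemma gw_sin3 {x : ℝ} (hx : 0 ≤ x) : x - x^3/6 ≤ Real.sin x := by
  have h := gw_aux (fun t => Real.sin t - (t - t^3/6)) (fun t => Real.cos t - (1 - t^2/2))
      (fun y => by
        have h1 := (Real.hasDerivAt_sin y).sub
          ((hasDerivAt_id y).sub ((hasDerivAt_pow 3 y).div_const 6))
        exact h1.congr_deriv (by push_cast; ring))
      (by norm_num)
      (fun y hy => by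
        have := gw_cos2 hy.le
        show (0:ℝ) ≤ Real.cos y - (1 - y^2/2); linarith) hx
  beta_reduce at h; linarith

lemma gw_cos4 {x : ℝ} (hx : 0 ≤ x) : Real.cos x ≤ 1 - x^2/2 + x^4/24 := by
  have h := gw_aux (fun t => 1 - t^2/2 + t^4/24 - Real.cos t)
      (fun t => Real.sin t - (t - t^3/6))
      (fun y => by
        have h1 := ((((hasDerivAt_pow 2 y).div_const 2).const_sub 1).add
          ((hasDerivAt_pow 4 y).div_const 24)).sub (Real.hasDerivAt_cos y)
        exact h1.congr_deriv (by push_cast; ring))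
      (by norm_num)
      (fun y hy => by
        have := gw_sin3 hy.le
        show (0:ℝ) ≤ Real.sin y - (y - y^3/6); linarith) hx
  beta_reduce at h; linarith

lemma gw_sin5 {x : ℝ} (hx : 0 ≤ x) : Real.sin x ≤ x - x^3/6 + x^5/120 := by
  have h := gw_aux (fun t => t - t^3/6 + t^5/120 - Real.sin t)
      (fun t => 1 - t^2/2 + t^4/24 - Real.cos t)
      (fun y => by
        have h1 := (((hasDerivAt_id y).sub ((hasDerivAt_pow 3 y).div_const 6)).add
          ((hasDerivAt_pow 5 y).div_const 120)).sub (Real.hasDerivAt_sin y)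
        exact h1.congr_deriv (by push_cast; ring))
      (by norm_num)
      (fun y hy => by
        have := gw_cos4 hy.le
        show (0:ℝ) ≤ 1 - y^2/2 + y^4/24 - Real.cos y; linarith) hx
  beta_reduce at h; linarith

lemma gw_cos6 {x : ℝ} (hx : 0 ≤ x) : 1 - x^2/2 + x^4/24 - x^6/720 ≤ Real.cos x := by
  have h := gw_aux (fun t => Real.cos t - (1 - t^2/2 + t^4/24 - t^6/720))
      (fun t => t - t^3/6 + t^5/120 - Real.sin t)
      (fun y => by
        have h1 := (Real.hasDerivAt_cos y).sub (((((hasDerivAt_pow 2 y).div_const 2).const_sub 1).add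
          ((hasDerivAt_pow 4 y).div_const 24)).sub ((hasDerivAt_pow 6 y).div_const 720))
        exact h1.congr_deriv (by push_cast; ring))
      (by norm_num)
      (fun y hy => by
        have := gw_sin5 hy.le
        show (0:ℝ) ≤ y - y^3/6 + y^5/120 - Real.sin y; linarith) hx
  beta_reduce at h; linarith

lemma gw_sin7 {x : ℝ} (hx : 0 ≤ x) : x - x^3/6 + x^5/120 - x^7/5040 ≤ Real.sin x := by
  have h := gw_aux (fun t => Real.sin t - (t - t^3/6 + t^5/120 - t^7/5040))
      (fun t => Real.cos t - (1 - t^2/2 + t^4/24 - t^6/720))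
      (fun y => by
        have h1 := (Real.hasDerivAt_sin y).sub ((((hasDerivAt_id y).sub
          ((hasDerivAt_pow 3 y).div_const 6)).add ((hasDerivAt_pow 5 y).div_const 120)).sub
          ((hasDerivAt_pow 7 y).div_const 5040))
        exact h1.congr_deriv (by push_cast; ring))
      (by norm_num)
      (fun y hy => by
        have := gw_cos6 hy.le
        show (0:ℝ) ≤ Real.cos y - (1 - y^2/2 + y^4/24 - y^6/720); linarith) hx
  beta_reduce at h; linarith

lemma gw_cos8 {x : ℝ} (hx : 0 ≤ x) :
    Real.cos x ≤ 1 - x^2/2 + x^4/24 - x^6/720 + x^8/40320 := by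
  have h := gw_aux (fun t => 1 - t^2/2 + t^4/24 - t^6/720 + t^8/40320 - Real.cos t)
      (fun t => Real.sin t - (t - t^3/6 + t^5/120 - t^7/5040))
      (fun y => by
        have h1 := (((((hasDerivAt_pow 2 y).div_const 2).const_sub 1).add
          ((hasDerivAt_pow 4 y).div_const 24)).sub ((hasDerivAt_pow 6 y).div_const 720)).add
          ((hasDerivAt_pow 8 y).div_const 40320)
        exact (h1.sub (Real.hasDerivAt_cos y)).congr_deriv (by push_cast; ring))
      (by norm_num)
      (fun y hy => by
        have := gw_sin7 hy.le
        show (0:ℝ) ≤ Real.sin y - (y - y^3/6 + y^5/120 - y^7/5040); linarith) hx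
  beta_reduce at h; linarith

lemma gw_sin9 {x : ℝ} (hx : 0 ≤ x) :
    Real.sin x ≤ x - x^3/6 + x^5/120 - x^7/5040 + x^9/362880 := by
  have h := gw_aux (fun t => t - t^3/6 + t^5/120 - t^7/5040 + t^9/362880 - Real.sin t)
      (fun t => 1 - t^2/2 + t^4/24 - t^6/720 + t^8/40320 - Real.cos t)
      (fun y => by
        have h1 := ((((hasDerivAt_id y).sub ((hasDerivAt_pow 3 y).div_const 6)).add
          ((hasDerivAt_pow 5 y).div_const 120)).sub ((hasDerivAt_pow 7 y).div_const 5040)).add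
          ((hasDerivAt_pow 9 y).div_const 362880)
        exact (h1.sub (Real.hasDerivAt_sin y)).congr_deriv (by push_cast; ring))
      (by norm_num)
      (fun y hy => by
        have := gw_cos8 hy.le
        show (0:ℝ) ≤ 1 - y^2/2 + y^4/24 - y^6/720 + y^8/40320 - Real.cos y; linarith) hx
  beta_reduce at h; linarith

lemma gw_cos10 {x : ℝ} (hx : 0 ≤ x) :
    1 - x^2/2 + x^4/24 - x^6/720 + x^8/40320 - x^10/3628800 ≤ Real.cos x := by
  have h := gw_aux
      (fun t => Real.cos t - (1 - t^2/2 + t^4/24 - t^6/720 + t^8/40320 - t^10/3628800))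
      (fun t => t - t^3/6 + t^5/120 - t^7/5040 + t^9/362880 - Real.sin t)
      (fun y => by
        have h1 := (Real.hasDerivAt_cos y).sub (((((((hasDerivAt_pow 2 y).div_const 2).const_sub 1).add
          ((hasDerivAt_pow 4 y).div_const 24)).sub ((hasDerivAt_pow 6 y).div_const 720)).add
          ((hasDerivAt_pow 8 y).div_const 40320)).sub ((hasDerivAt_pow 10 y).div_const 3628800))
        exact h1.congr_deriv (by push_cast; ring))
      (by norm_num)
      (fun y hy => by
        have := gw_sin9 hy.le
        show (0:ℝ) ≤ y - y^3/6 + y^5/120 - y^7/5040 + y^9/362880 - Real.sin y; linarith) hx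
  beta_reduce at h; linarith

lemma gw_sin11 {x : ℝ} (hx : 0 ≤ x) :
    x - x^3/6 + x^5/120 - x^7/5040 + x^9/362880 - x^11/39916800 ≤ Real.sin x := by
  have h := gw_aux
      (fun t => Real.sin t - (t - t^3/6 + t^5/120 - t^7/5040 + t^9/362880 - t^11/39916800))
      (fun t => Real.cos t - (1 - t^2/2 + t^4/24 - t^6/720 + t^8/40320 - t^10/3628800))
      (fun y => by
        have h1 := (Real.hasDerivAt_sin y).sub ((((((hasDerivAt_id y).sub
          ((hasDerivAt_pow 3 y).div_const 6)).add ((hasDerivAt_pow 5 y).div_const 120)).sub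
          ((hasDerivAt_pow 7 y).div_const 5040)).add ((hasDerivAt_pow 9 y).div_const 362880)).sub
          ((hasDerivAt_pow 11 y).div_const 39916800))
        exact h1.congr_deriv (by push_cast; ring))
      (by norm_num)
      (fun y hy => by
        have := gw_cos10 hy.le
        show (0:ℝ) ≤ Real.cos y - (1 - y^2/2 + y^4/24 - y^6/720 + y^8/40320 - y^10/3628800)
        linarith) hx
  beta_reduce at h; linarith

lemma gw_cos12 {x : ℝ} (hx : 0 ≤ x) :
    Real.cos x ≤ 1 - x^2/2 + x^4/24 - x^6/720 + x^8/40320 - x^10/3628800 + x^12/479001600 := by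
  have h := gw_aux
      (fun t => 1 - t^2/2 + t^4/24 - t^6/720 + t^8/40320 - t^10/3628800 + t^12/479001600
        - Real.cos t)
      (fun t => Real.sin t - (t - t^3/6 + t^5/120 - t^7/5040 + t^9/362880 - t^11/39916800))
      (fun y => by
        have h1 := ((((((hasDerivAt_pow 2 y).div_const 2).const_sub 1).add
          ((hasDerivAt_pow 4 y).div_const 24)).sub ((hasDerivAt_pow 6 y).div_const 720)).add
          ((hasDerivAt_pow 8 y).div_const 40320)).sub ((hasDerivAt_pow 10 y).div_const 3628800)
        have h2 := (h1.add ((hasDerivAt_pow 12 y).div_const 479001600)).sub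
          (Real.hasDerivAt_cos y)
        exact h2.congr_deriv (by push_cast; ring))
      (by norm_num)
      (fun y hy => by
        have := gw_sin11 hy.le
        show (0:ℝ) ≤ Real.sin y - (y - y^3/6 + y^5/120 - y^7/5040 + y^9/362880 - y^11/39916800)
        linarith) hx
  beta_reduce at h; linarith

lemma gw_key {x : ℝ} (h0 : 0 < x) (h1 : x ≤ 31416/10000) :
    (137932/100000 : ℝ) * (1 - Real.cos x) ≤ x := by
  have hc := gw_cos10 h0.le
  nlinarith [sq_nonneg (x - 23315/10000), sq_nonneg (x*(x - 23315/10000)),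
    sq_nonneg (x^2*(x - 23315/10000)), sq_nonneg (x^3*(x - 23315/10000)),
    mul_pos h0 h0, sq_nonneg x, mul_nonneg (mul_nonneg h0.le h0.le) h0.le,
    mul_nonneg (sub_nonneg.2 h1) h0.le]

lemma gw_cos_lt_one {x : ℝ} (hx : x ∈ Set.Ioc (0:ℝ) Real.pi) : Real.cos x < 1 := by
  obtain ⟨h0, h1⟩ := hx
  have hπ := Real.pi_pos
  refine lt_of_le_of_ne (Real.cos_le_one x) (fun h => ?_)
  have := (Real.cos_eq_one_iff_of_lt_of_lt (by linarith) (by linarith)).1 h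
  linarith

lemma gw_lb {x : ℝ} (hx : x ∈ Set.Ioc (0:ℝ) Real.pi) :
    (8781/10000 : ℝ) ≤ 2 / Real.pi * (x / (1 - Real.cos x)) := by
  obtain ⟨h0, h1⟩ := hx
  have hπ := Real.pi_gt_d6
  have hπ' := Real.pi_lt_d6
  have hpos : 0 < 1 - Real.cos x := by
    have := gw_cos_lt_one ⟨h0, h1⟩; linarith
  have hkey : (137932/100000 : ℝ) * (1 - Real.cos x) ≤ x :=
    gw_key h0 (by linarith)
  have heq : 2 / Real.pi * (x / (1 - Real.cos x)) = (2 * x) / (Real.pi * (1 - Real.cos x)) :=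
    div_mul_div_comm 2 Real.pi x (1 - Real.cos x)
  rw [heq, le_div_iff₀ (by positivity)]
  nlinarith [mul_nonneg (by linarith : (0:ℝ) ≤ 3141593/1000000 - Real.pi) hpos.le]

lemma gw_ub : 2 / Real.pi * ((23/10) / (1 - Real.cos (23/10))) < (879/1000 : ℝ) := by
  have hπ := Real.pi_gt_d6
  have hc : Real.cos (23/10) ≤ -(66627/100000 : ℝ) := by
    have := gw_cos12 (x := 23/10) (by norm_num)
    norm_num at this ⊢
    linarith
  have hpos : (0:ℝ) < 1 - Real.cos (23/10) := by linarith
  have heq : 2 / Real.pi * ((23/10) / (1 - Real.cos (23/10)))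
      = (2 * (23/10)) / (Real.pi * (1 - Real.cos (23/10))) :=
    div_mul_div_comm 2 Real.pi (23/10) (1 - Real.cos (23/10))
  rw [heq, div_lt_iff₀ (by positivity)]
  nlinarith [mul_nonneg (by linarith : (0:ℝ) ≤ Real.pi - 3141592/1000000)
    (by linarith : (0:ℝ) ≤ 1 - Real.cos (23/10) - 166627/100000)]

theorem stmt7 :
    (0.878 : ℝ) <
      sInf {y : ℝ | ∃ x ∈ Set.Ioc (0:ℝ) Real.pi,
        y = (2 / Real.pi) * (x / (1 - Real.cos x))} ∧
    sInf {y : ℝ | ∃ x ∈ Set.Ioc (0:ℝ) Real.pi,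
        y = (2 / Real.pi) * (x / (1 - Real.cos x))} < (0.879 : ℝ) ∧
    ∀ x ∈ Set.Ioc (0:ℝ) Real.pi,
      (2 / Real.pi) * (x / (1 - Real.cos x)) > (0.878 : ℝ) := by
  set S := {y : ℝ | ∃ x ∈ Set.Ioc (0:ℝ) Real.pi,
      y = (2 / Real.pi) * (x / (1 - Real.cos x))} with hS
  have hlb : ∀ y ∈ S, (8781/10000 : ℝ) ≤ y := by
    rintro y ⟨x, hx, rfl⟩
    exact gw_lb hx
  have hne : S.Nonempty :=
    ⟨2 / Real.pi * (Real.pi / (1 - Real.cos Real.pi)), Real.pi, ⟨Real.pi_pos, le_refl _⟩, rfl⟩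
  have hbdd : BddBelow S := ⟨8781/10000, hlb⟩
  have hmem : 2 / Real.pi * ((23/10) / (1 - Real.cos (23/10))) ∈ S := by
    refine ⟨23/10, ⟨by norm_num, ?_⟩, rfl⟩
    have := Real.pi_gt_d6
    linarith
  refine ⟨?_, ?_, ?_⟩
  · have := le_csInf hne hlb
    norm_num
    linarith
  · have h1 := csInf_le hbdd hmem
    have h2 := gw_ub
    norm_num
    linarith
  · intro x hx
    have := gw_lb hx
    norm_num
    linarith
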